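/- arXiv:1410.0297 — 2 statements merged into one kernel-verified Lean document; each statement's English description precedes it below -/
import Mathlib

section
/- Fix integers c ≥ 0 and b ≥ 2. Every singleton set T = {t}, for t a positive integer, is [c,b]-good. -/
/-- The augmented generalized happy function `S_{[c,b]}`: it maps `a` to `c` plus the
sum of the squares of the base-`b` digits of `a`. -/
def S (c b a : ℕ) : ℕ := c + ((Nat.digits b a).map (· ^ 2)).sum


/-- `u ∈ U_{[c,b]}`: `u` is a positive integer that is a periodic point of `S_{[c,b]}`. -/
def inU (c b u : ℕ) : Prop := 0 < u ∧ ∃ m, 0 < m ∧ (S c b)^[m] u = u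


/-- A finite set `T` of positive integers is `[c,b]`-good if for each `u ∈ U_{[c,b]}`
there exist `n, k ≥ 0` such that `S_{[c,b]}^k (t + n) = u` for all `t ∈ T`. -/
def Good (c b : ℕ) (T : Finset ℕ) : Prop :=
  ∀ u, inU c b u → ∃ n k : ℕ, ∀ t ∈ T, (S c b)^[k] (t + n) = u

lemma S_pos (c b a : ℕ) (hb : 2 ≤ b) (ha : 0 < a) : 0 < S c b a := by
  have hne : Nat.digits b a ≠ [] := Nat.digits_ne_nil_iff_ne_zero.mpr ha.ne'
  have hlast := Nat.getLast_digit_ne_zero b ha.ne'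
  have hmem : (Nat.digits b a).getLast hne ∈ Nat.digits b a := List.getLast_mem hne
  have hmem2 : ((Nat.digits b a).getLast hne) ^ 2 ∈ (Nat.digits b a).map (· ^ 2) :=
    List.mem_map_of_mem hmem
  have hle : ((Nat.digits b a).getLast hne) ^ 2 ≤ ((Nat.digits b a).map (· ^ 2)).sum :=
    List.single_le_sum (fun x _ => Nat.zero_le x) _ hmem2
  have : 0 < ((Nat.digits b a).getLast hne) ^ 2 := Nat.pow_pos (Nat.pos_of_ne_zero hlast)
  unfold S
  omega

lemma S_mul_pow (c b w N : ℕ) (hb : 2 ≤ b) (hw : 0 < w) :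
    S c b (b ^ N * w) = S c b w := by
  unfold S
  rw [Nat.digits_base_pow_mul (by omega) hw]
  simp

theorem stmt_8 (c b : ℕ) (hb : 2 ≤ b) (t : ℕ) (ht : 0 < t) :
    Good c b {t} := by
  intro u hu
  obtain ⟨hu0, m, hm, hiter⟩ := hu
  set w := (S c b)^[m - 1] u with hw
  have hw0 : 0 < w := by
    clear_value w
    subst hw
    induction m - 1 with
    | zero => simpa using hu0
    | succ j ih =>
      rw [Function.iterate_succ_apply']
      exact S_pos c b _ hb ih
  have hSw : S c b w = u := by
    have : (S c b)^[m] u = S c b ((S c b)^[m - 1] u) := by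
      conv_lhs => rw [show m = (m - 1) + 1 by omega]
      rw [Function.iterate_succ_apply']
    rw [← hiter, this]
  -- pick N large so b^N * w ≥ t
  obtain ⟨N, hN⟩ := pow_unbounded_of_one_lt t (by omega : 1 < b)
  have hge : t ≤ b ^ N * w := le_trans hN.le (Nat.le_mul_of_pos_right _ hw0)
  refine ⟨b ^ N * w - t, 1, ?_⟩
  intro s hs
  simp only [Finset.mem_singleton] at hs
  subst hs
  rw [Nat.add_sub_cancel' hge, Function.iterate_one, S_mul_pow c b w N hb hw0, hSw]
end

section
/- Fix integers c ≥ 0 and b ≥ 2, let u be any positive integer in the image of S_{[c,b]} (i.e., u = S_{[c,b]}(v) for some positive integer v), and set d = gcd(2, b-1). Then for every positive integer N there exists a positive integer n such that for each i with 0 ≤ i ≤ N-1 there is an integer k ≥ 0 with S_{[c,b]}^k(n + i·d) = u. -/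
/-- digit square sum -/
def D (b m : ℕ) : ℕ := ((Nat.digits b m).map (· ^ 2)).sum

lemma S_eq (c b a : ℕ) : S c b a = c + D b a := rfl

lemma D_zero (b : ℕ) : D b 0 = 0 := by simp [D]

lemma Dstep (b m : ℕ) (hb : 2 ≤ b) (hm : 0 < m) :
    D b m = (m % b) ^ 2 + D b (m / b) := by
  unfold D
  rw [Nat.digits_def' (by omega : 1 < b) hm]
  simp

lemma Dstep' (b m : ℕ) (hb : 2 ≤ b) :
    D b m = (m % b) ^ 2 + D b (m / b) := by
  rcases Nat.eq_zero_or_pos m with h | h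
  · subst h; simp [D_zero]
  · exact Dstep b m hb h

lemma Dsplit (b : ℕ) (hb : 2 ≤ b) :
    ∀ P z w, w < b ^ P → D b (z * b ^ P + w) = D b z + D b w := by
  intro P
  induction P with
  | zero =>
    intro z w hw
    have hw0 : w = 0 := by simpa using hw
    subst hw0
    simp [D_zero]
  | succ P ih =>
    intro z w hw
    by_cases hz : z = 0
    · simp [hz, D_zero]
    have hb0 : 0 < b := by omega
    have hpow : (0:ℕ) < b ^ (P+1) := Nat.pow_pos hb0
    have hn : 0 < z * b ^ (P+1) + w := by
      have : 0 < z * b ^ (P+1) := Nat.mul_pos (Nat.pos_of_ne_zero hz) hpow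
      omega
    have hrw : z * b ^ (P+1) + w = b * (z * b ^ P) + w := by ring
    have hmod : (z * b ^ (P+1) + w) % b = w % b := by
      rw [hrw, Nat.mul_add_mod]
    have hdiv : (z * b ^ (P+1) + w) / b = z * b ^ P + w / b := by
      rw [hrw, Nat.mul_add_div hb0]
    have hwb : w / b < b ^ P := by
      rw [Nat.div_lt_iff_lt_mul hb0]
      calc w < b ^ (P+1) := hw
        _ = b ^ P * b := by ring
    rw [Dstep b _ hb hn, hmod, hdiv, ih z (w / b) hwb, Dstep' b w hb]
    ring

lemma Dsingle (b a : ℕ) (hb : 2 ≤ b) (ha : a < b) : D b a = a ^ 2 := by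
  rcases Nat.eq_zero_or_pos a with h | h
  · subst h; simp [D_zero]
  · rw [Dstep b a hb h, Nat.mod_eq_of_lt ha, Nat.div_eq_of_lt ha, D_zero]
    omega

lemma Dpos (b : ℕ) (hb : 2 ≤ b) : ∀ m, 0 < m → 0 < D b m := by
  intro m
  induction m using Nat.strong_induction_on with
  | _ m ih =>
    intro hm
    rw [Dstep b m hb hm]
    rcases Nat.eq_zero_or_pos (m % b) with h | h
    · have hdvd : m / b > 0 := by
        rcases Nat.eq_zero_or_pos (m / b) with h2 | h2
        · have := Nat.div_add_mod m b
          have : b * (m / b) = 0 := by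
            rw [h2, Nat.mul_zero]
          omega
        · exact h2
      have := ih (m / b) (Nat.div_lt_self hm (by omega)) hdvd
      omega
    · have : 0 < (m % b) ^ 2 := Nat.pow_pos h
      omega

lemma Dmul_base (b m : ℕ) (hb : 2 ≤ b) : D b (b * m) = D b m := by
  rcases Nat.eq_zero_or_pos m with h | h
  · subst h; simp
  have hbm : 0 < b * m := Nat.mul_pos (by omega) h
  rw [Dstep b _ hb hbm, Nat.mul_mod_right, Nat.mul_div_cancel_left _ (by omega : 0 < b)]
  simp

/-- number with exactly `A` one-digits -/
def rep (b : ℕ) : ℕ → ℕ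
  | 0 => 0
  | A + 1 => b * rep b A + 1

lemma rep_pos (b A : ℕ) (hA : 1 ≤ A) : 1 ≤ rep b A := by
  cases A with
  | zero => omega
  | succ A => simp [rep]

lemma Drep (b : ℕ) (hb : 2 ≤ b) : ∀ A, D b (rep b A) = A := by
  intro A
  induction A with
  | zero => simp [rep, D_zero]
  | succ A ih =>
    show D b (b * rep b A + 1) = A + 1
    have hpos : 0 < b * rep b A + 1 := by omega
    rw [Dstep b _ hb hpos, Nat.mul_add_mod, Nat.mul_add_div (by omega : 0 < b)]
    rw [Nat.mod_eq_of_lt (by omega : 1 < b), Nat.div_eq_of_lt (by omega : 1 < b)]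
    simp [ih]
    omega

lemma Dparity (b : ℕ) (hb : 2 ≤ b) (hbo : b % 2 = 1) : ∀ t, D b t % 2 = t % 2 := by
  intro t
  induction t using Nat.strong_induction_on with
  | _ t ih =>
    rcases Nat.eq_zero_or_pos t with h | h
    · subst h; simp [D_zero]
    rw [Dstep b t hb h]
    have hq := ih (t / b) (Nat.div_lt_self h (by omega))
    have ht := Nat.div_add_mod t b
    have h2 : b * (t / b) % 2 = (t / b) % 2 := by
      rw [Nat.mul_mod, hbo, Nat.one_mul, Nat.mod_mod]
    have hr2 : (t % b) ^ 2 % 2 = (t % b) % 2 := by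
      rw [Nat.pow_mod]
      rcases Nat.mod_two_eq_zero_or_one (t % b) with h3 | h3 <;> rw [h3] <;> norm_num
    omega

lemma Dmod (b : ℕ) (hb : 2 ≤ b) (t : ℕ) : D b t ≡ t [MOD Nat.gcd 2 (b - 1)] := by
  rcases Nat.mod_two_eq_zero_or_one b with h | h
  · -- b even: gcd = 1
    have : Nat.gcd 2 (b - 1) = 1 := by
      have h1 : (b - 1) % 2 = 1 := by omega
      rw [Nat.gcd_rec, h1]
      simp
    rw [this]
    exact Nat.modEq_one
  · -- b odd: gcd = 2
    have : Nat.gcd 2 (b - 1) = 2 := Nat.gcd_eq_left (by omega)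
    rw [this]
    exact Dparity b hb h t

lemma solve_a (b C : ℕ) (hb : 2 ≤ b) (hC : 1 ≤ C) (hodd : b % 2 = 1 → C % 2 = 1) :
    ∃ a, a + 1 < b ∧ (2 * a + 1) ≡ C [MOD b - 1] := by
  rcases Nat.mod_two_eq_zero_or_one b with hbe | hbo
  · -- b even
    set n := b - 1 with hn
    have hn1 : 1 ≤ n := by omega
    rcases Nat.eq_or_lt_of_le hn1 with hn2 | hn2
    · -- n = 1 (b = 2): everything mod 1
      refine ⟨0, by omega, ?_⟩
      rw [← hn2]
      exact Nat.modEq_one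
    · -- n ≥ 2, n odd
      refine ⟨((C - 1 + n) * (b / 2)) % n, ?_, ?_⟩
      · have := Nat.mod_lt ((C - 1 + n) * (b / 2)) (show 0 < n by omega)
        omega
      · have h2b : 2 * (b / 2) = b := by omega
        have hbmod : b ≡ 1 [MOD n] := by
          show b % n = 1 % n
          have hbn : b = 1 + 1 * n := by omega
          rw [hbn, Nat.add_mul_mod_self_right]
        calc 2 * (((C - 1 + n) * (b / 2)) % n) + 1
            ≡ 2 * ((C - 1 + n) * (b / 2)) + 1 [MOD n] :=
              ((Nat.mod_modEq _ n).mul_left 2).add_right 1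
          _ = (C - 1 + n) * (2 * (b / 2)) + 1 := by ring
          _ = (C - 1 + n) * b + 1 := by rw [h2b]
          _ ≡ (C - 1 + n) * 1 + 1 [MOD n] := (hbmod.mul_left _).add_right 1
          _ = C + n := by omega
          _ ≡ C [MOD n] := by
              show (C + n) % n = C % n
              exact Nat.add_mod_right C n
  · -- b odd
    have hb3 : 3 ≤ b := by omega
    have hCo : C % 2 = 1 := hodd hbo
    set h := (b - 1) / 2 with hh
    have hh1 : 1 ≤ h := by omega
    refine ⟨((C - 1) / 2) % h, ?_, ?_⟩
    · have := Nat.mod_lt ((C - 1) / 2) (show 0 < h by omega)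
      omega
    · set a := ((C - 1) / 2) % h with ha
      set q := ((C - 1) / 2) / h with hq
      have hdm : h * q + a = (C - 1) / 2 := by
        rw [ha, hq]; exact Nat.div_add_mod _ _
      have h2h : 2 * h = b - 1 := by omega
      have hkey : C = (2 * a + 1) + (b - 1) * q := by
        have h1 : 2 * ((C - 1) / 2) = C - 1 := by omega
        have h2 : (b - 1) * q = 2 * (h * q) := by rw [← h2h]; ring
        omega
      show (2 * a + 1) % (b - 1) = C % (b - 1)
      rw [hkey, Nat.add_mul_mod_self_left]

lemma merge (b : ℕ) (hb : 2 ≤ b) (f1 f2 : ℕ) (h12 : f1 < f2)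
    (hcong : f1 ≡ f2 [MOD Nat.gcd 2 (b - 1)]) :
    ∃ s s', D b (D b (f1 + s) + s') = D b (D b (f2 + s) + s') := by
  set δ := f2 - f1 with hδdef
  have hδ : 0 < δ := by omega
  set m := δ + f1 + 1 with hm
  set B := b ^ m with hB
  have hBm : m < B := (Nat.lt_pow_self (show 1 < b by omega) : m < b ^ m)
  have hBbig : δ + f1 < B := by omega
  set C := D b (B - δ) with hC
  have hC1 : 1 ≤ C := Dpos b hb _ (by omega)
  have hodd : b % 2 = 1 → C % 2 = 1 := by
    intro hbo
    have hg : Nat.gcd 2 (b - 1) = 2 := Nat.gcd_eq_left (by omega)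
    rw [hg] at hcong
    have hdvd : 2 ∣ f2 - f1 := (Nat.modEq_iff_dvd' h12.le).mp hcong
    have hδ2 : δ % 2 = 0 := by omega
    have hBo : B % 2 = 1 := by
      rw [hB, Nat.pow_mod, hbo, Nat.one_pow]
    have := Dparity b hb hbo (B - δ)
    omega
  obtain ⟨a, hab, hamod⟩ := solve_a b C hb hC1 hodd
  set s := a * B + (B - δ) - f1 with hs
  have hs1 : f1 + s = a * B + (B - δ) := by
    have : f1 ≤ B - δ := by omega
    omega
  have hs2 : f2 + s = (a + 1) * B := by
    have hmul : (a + 1) * B = a * B + B := by ring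
    omega
  have hg1 : D b (f1 + s) = a ^ 2 + C := by
    rw [hs1]
    have h1 : D b (a * B + (B - δ)) = D b a + D b (B - δ) := by
      rw [hB]; exact Dsplit b hb m a _ (by omega)
    have h2 : D b a = a ^ 2 := Dsingle b a hb (by omega)
    omega
  have hg2 : D b (f2 + s) = (a + 1) ^ 2 := by
    rw [hs2]
    have h1 : D b ((a+1) * B) = D b (a+1) + D b 0 := by
      rw [hB]; simpa using Dsplit b hb m (a+1) 0 (by positivity)
    have h2 : D b (a+1) = (a+1) ^ 2 := Dsingle b (a+1) hb (by omega)
    have h3 : D b 0 = 0 := D_zero b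
    omega
  -- second move
  set g1 := a ^ 2 + C with hg1d
  set g2 := (a + 1) ^ 2 with hg2d
  have hgmod : g2 ≡ g1 [MOD b - 1] := by
    have hsq : g2 = a ^ 2 + (2 * a + 1) := by rw [hg2d]; ring
    rw [hsq, hg1d]
    exact hamod.add_left _
  set lo := min g1 g2 with hlo
  set hi := max g1 g2 with hhi
  have hlohi : lo ≤ hi := min_le_max
  have hmodlh : lo ≡ hi [MOD b - 1] := by
    rcases le_total g1 g2 with h | h
    · rw [hlo, hhi, min_eq_left h, max_eq_right h]; exact hgmod.symm
    · rw [hlo, hhi, min_eq_right h, max_eq_left h]; exact hgmod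
  obtain ⟨m', hm'⟩ := (Nat.modEq_iff_dvd' hlohi).mp hmodlh
  have hhieq : hi = lo + (b - 1) * m' := by omega
  set P2 := b * m' + lo + 1 with hP2
  have hP2big : b * m' + lo < b ^ P2 := by
    have := (Nat.lt_pow_self (show 1 < b by omega) : P2 < b ^ P2)
    omega
  have hm'P : m' < b ^ P2 := by
    have : m' ≤ b * m' := Nat.le_mul_of_pos_left m' (by omega)
    omega
  set s' := b ^ P2 + m' - lo with hs'
  have hlos' : lo + s' = 1 * b ^ P2 + m' := by
    have : lo ≤ b ^ P2 := by omega
    omega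
  have hhis' : hi + s' = 1 * b ^ P2 + b * m' := by
    have hb1 : (b - 1) * m' + m' = b * m' := by
      have hb2 : b - 1 + 1 = b := by omega
      calc (b - 1) * m' + m' = (b - 1 + 1) * m' := by ring
        _ = b * m' := by rw [hb2]
    omega
  have hDlo : D b (lo + s') = 1 + D b m' := by
    rw [hlos', Dsplit b hb P2 1 m' hm'P, Dsingle b 1 hb (by omega)]
    omega
  have hDhi : D b (hi + s') = 1 + D b m' := by
    rw [hhis', Dsplit b hb P2 1 (b * m') (by omega), Dsingle b 1 hb (by omega),
      Dmul_base b m' hb]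
    omega
  refine ⟨s, s', ?_⟩
  rw [hg1, hg2]
  have e1 : D b (g1 + s') = 1 + D b m' := by
    rcases le_total g1 g2 with h | h
    · have hx : g1 = lo := by rw [hlo, min_eq_left h]
      rw [hx, hDlo]
    · have hx : g1 = hi := by rw [hhi, max_eq_left h]
      rw [hx, hDhi]
  have e2 : D b (g2 + s') = 1 + D b m' := by
    rcases le_total g1 g2 with h | h
    · have hx : g2 = hi := by rw [hhi, max_eq_right h]
      rw [hx, hDhi]
    · have hx : g2 = lo := by rw [hlo, min_eq_right h]
      rw [hx, hDlo]
  rw [e1, e2]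

lemma transfer (c b u : ℕ) (hb : 2 ≤ b) (N : ℕ) (e : ℕ → ℕ) (s : ℕ)
    (h : ∃ A', 1 ≤ A' ∧ ∀ i, i < N → ∃ k, (S c b)^[k] (c + A' + D b (e i + s)) = u) :
    ∃ A, 1 ≤ A ∧ ∀ i, i < N → ∃ k, (S c b)^[k] (c + A + e i) = u := by
  obtain ⟨A', hA'1, hA'⟩ := h
  set T := (Finset.range N).sup e with hT
  set P := c + s + T + 1 with hP
  have hPow : c + s + T < b ^ P := by
    have := (Nat.lt_pow_self (show 1 < b by omega) : P < b ^ P)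
    omega
  have hrep : 1 ≤ rep b A' := rep_pos b A' hA'1
  have hmul : b ^ P ≤ rep b A' * b ^ P := Nat.le_mul_of_pos_left _ (by omega)
  refine ⟨rep b A' * b ^ P + s - c, by omega, ?_⟩
  intro i hi
  have hiT : e i ≤ T := Finset.le_sup (Finset.mem_range.mpr hi)
  have hkey : c + (rep b A' * b ^ P + s - c) + e i = rep b A' * b ^ P + (s + e i) := by
    omega
  obtain ⟨k, hk⟩ := hA' i hi
  refine ⟨k + 1, ?_⟩
  rw [Function.iterate_succ_apply]
  have hS : S c b (c + (rep b A' * b ^ P + s - c) + e i) = c + A' + D b (e i + s) := by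
    rw [hkey, S_eq, Dsplit b hb P (rep b A') (s + e i) (by omega), Drep b hb A']
    have : s + e i = e i + s := by omega
    rw [this]
    omega
  rw [hS]
  exact hk

lemma main (c b u Q : ℕ) (hb : 2 ≤ b) (hQ : 1 ≤ Q) (hu : u = c + Q) :
    ∀ K (N : ℕ) (e : ℕ → ℕ), (Finset.image e (Finset.range N)).card ≤ K →
      (∀ i j, i < N → j < N → e i ≡ e j [MOD Nat.gcd 2 (b - 1)]) →
      ∃ A, 1 ≤ A ∧ ∀ i, i < N → ∃ k, (S c b)^[k] (c + A + e i) = u := by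
  intro K
  induction K with
  | zero =>
    intro N e hcard _
    cases N with
    | zero => exact ⟨1, le_refl 1, by intro i hi; omega⟩
    | succ N =>
      exfalso
      have h0 : e 0 ∈ Finset.image e (Finset.range (N + 1)) :=
        Finset.mem_image_of_mem e (Finset.mem_range.mpr (by omega))
      have := Finset.card_pos.mpr ⟨e 0, h0⟩
      omega
  | succ K ih =>
    intro N e hcard hcong
    rcases Nat.eq_zero_or_pos N with hN | hN
    · exact ⟨1, le_refl 1, by intro i hi; omega⟩
    by_cases hall : ∀ i, i < N → e i = e 0
    · -- base case: all offsets equal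
      set P := c + e 0 + 1 with hP
      have hPow : c + e 0 < b ^ P := by
        have := (Nat.lt_pow_self (show 1 < b by omega) : P < b ^ P)
        omega
      have hrep : 1 ≤ rep b Q := rep_pos b Q hQ
      have hmul : b ^ P ≤ rep b Q * b ^ P := Nat.le_mul_of_pos_left _ (by omega)
      refine ⟨rep b Q * b ^ P - (c + e 0), by omega, ?_⟩
      intro i hi
      rw [hall i hi]
      have hkey : c + (rep b Q * b ^ P - (c + e 0)) + e 0 = rep b Q * b ^ P := by omega
      refine ⟨1, ?_⟩
      rw [Function.iterate_one, hkey, S_eq]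
      have hD : D b (rep b Q * b ^ P) = Q := by
        have h1 : D b (rep b Q * b ^ P) = D b (rep b Q) + D b 0 := by
          simpa using Dsplit b hb P (rep b Q) 0 (by positivity)
        have h2 := Drep b hb Q
        have h3 := D_zero b
        omega
      omega
    · -- merge two distinct offsets
      push_neg at hall
      obtain ⟨j0, hj0N, hj0⟩ := hall
      set f1 := min (e 0) (e j0) with hf1
      set f2 := max (e 0) (e j0) with hf2
      have h12 : f1 < f2 := by
        rcases le_total (e 0) (e j0) with h | h
        · rw [hf1, hf2, min_eq_left h, max_eq_right h]; omega
        · rw [hf1, hf2, min_eq_right h, max_eq_left h]; omega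
      have hcong12 : f1 ≡ f2 [MOD Nat.gcd 2 (b - 1)] := by
        have := hcong 0 j0 hN hj0N
        rcases le_total (e 0) (e j0) with h | h
        · rw [hf1, hf2, min_eq_left h, max_eq_right h]; exact this
        · rw [hf1, hf2, min_eq_right h, max_eq_left h]; exact this.symm
      obtain ⟨s, s', hkey⟩ := merge b hb f1 f2 h12 hcong12
      set φ : ℕ → ℕ := fun t => D b (D b (t + s) + s') with hφ
      have hφeq : φ (e 0) = φ (e j0) := by
        rcases le_total (e 0) (e j0) with h | h
        · have h1 : f1 = e 0 := by rw [hf1, min_eq_left h]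
          have h2 : f2 = e j0 := by rw [hf2, max_eq_right h]
          rw [hφ]; simpa [h1, h2] using hkey
        · have h1 : f1 = e j0 := by rw [hf1, min_eq_right h]
          have h2 : f2 = e 0 := by rw [hf2, max_eq_left h]
          rw [hφ]; simpa [h1, h2] using hkey.symm
      have hcard'' : (Finset.image (fun i => φ (e i)) (Finset.range N)).card ≤ K := by
        have h1 : Finset.image (fun i => φ (e i)) (Finset.range N)
            = Finset.image φ (Finset.image e (Finset.range N)) := by
          rw [Finset.image_image]
          rfl
        set T := Finset.image e (Finset.range N) with hTd
        have hv1 : e 0 ∈ T := Finset.mem_image_of_mem e (Finset.mem_range.mpr hN)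
        have hv2 : e j0 ∈ T := Finset.mem_image_of_mem e (Finset.mem_range.mpr hj0N)
        have h2 : Finset.image φ T = Finset.image φ (T.erase (e j0)) := by
          apply Finset.Subset.antisymm
          · intro x hx
            obtain ⟨t, ht, hxt⟩ := Finset.mem_image.mp hx
            by_cases htj : t = e j0
            · refine Finset.mem_image.mpr ⟨e 0, ?_, ?_⟩
              · exact Finset.mem_erase.mpr ⟨fun hc => hj0 hc.symm, hv1⟩
              · rw [hφeq, ← htj, hxt]
            · exact Finset.mem_image.mpr ⟨t, Finset.mem_erase.mpr ⟨htj, ht⟩, hxt⟩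
          · exact Finset.image_subset_image (Finset.erase_subset _ _)
        have h3 : (T.erase (e j0)).card = T.card - 1 := Finset.card_erase_of_mem hv2
        have h4 := Finset.card_image_le (s := T.erase (e j0)) (f := φ)
        have h5 : 1 ≤ T.card := Finset.card_pos.mpr ⟨e 0, hv1⟩
        rw [h1, h2]
        omega
      have hcong'' : ∀ i j, i < N → j < N →
          (fun i => φ (e i)) i ≡ (fun i => φ (e i)) j [MOD Nat.gcd 2 (b - 1)] := by
        intro i j hi hj
        show φ (e i) ≡ φ (e j) [MOD Nat.gcd 2 (b - 1)]
        have hchain : ∀ t, φ t ≡ t + s + s' [MOD Nat.gcd 2 (b - 1)] := by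
          intro t
          calc D b (D b (t + s) + s')
              ≡ D b (t + s) + s' [MOD Nat.gcd 2 (b - 1)] := Dmod b hb _
            _ ≡ (t + s) + s' [MOD Nat.gcd 2 (b - 1)] := (Dmod b hb _).add_right s'
        calc φ (e i) ≡ e i + s + s' [MOD _] := hchain (e i)
          _ ≡ e j + s + s' [MOD _] := ((hcong i j hi hj).add_right s).add_right s'
          _ ≡ φ (e j) [MOD _] := (hchain (e j)).symm
      obtain ⟨A'', hA''1, hA''⟩ := ih N (fun i => φ (e i)) hcard'' hcong''
      have step1 : ∃ A', 1 ≤ A' ∧ ∀ i, i < N →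
          ∃ k, (S c b)^[k] (c + A' + D b ((fun i => D b (e i + s)) i + s')) = u :=
        ⟨A'', hA''1, fun i hi => hA'' i hi⟩
      have step2 := transfer c b u hb N (fun i => D b (e i + s)) s' step1
      exact transfer c b u hb N e s step2

theorem stmt_14 (c b : ℕ) (hb : 2 ≤ b) (u : ℕ)
    (hu : ∃ v : ℕ, 0 < v ∧ S c b v = u)
    (d : ℕ) (hd : d = Nat.gcd 2 (b - 1)) :
    ∀ N : ℕ, 0 < N → ∃ n : ℕ, 0 < n ∧
      ∀ i : ℕ, i ≤ N - 1 → ∃ k : ℕ, (S c b)^[k] (n + i * d) = u := by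
  obtain ⟨v, hv, hSv⟩ := hu
  have hu' : u = c + D b v := by rw [← hSv]; rfl
  have hQ : 1 ≤ D b v := Dpos b hb v hv
  intro N hN
  set e : ℕ → ℕ := fun i => D b (i * d) with he
  have hd1 : 1 ≤ d := by
    rcases Nat.mod_two_eq_zero_or_one b with h | h
    · have : Nat.gcd 2 (b - 1) = 1 := by
        have h1 : (b - 1) % 2 = 1 := by omega
        rw [Nat.gcd_rec, h1]
        simp
      omega
    · have : Nat.gcd 2 (b - 1) = 2 := Nat.gcd_eq_left (by omega)
      omega
  have hcong : ∀ i j, i < N → j < N → e i ≡ e j [MOD Nat.gcd 2 (b - 1)] := by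
    intro i j hi hj
    have hz : ∀ i : ℕ, e i ≡ 0 [MOD Nat.gcd 2 (b - 1)] := by
      intro i
      have h1 : D b (i * d) ≡ i * d [MOD Nat.gcd 2 (b - 1)] := Dmod b hb _
      have h2 : i * d ≡ 0 [MOD Nat.gcd 2 (b - 1)] := by
        rw [← hd]
        exact Nat.modEq_zero_iff_dvd.mpr ⟨i, by ring⟩
      exact h1.trans h2
    exact (hz i).trans (hz j).symm
  obtain ⟨A, hA1, hA⟩ := main c b u (D b v) hb hQ hu'
    ((Finset.image e (Finset.range N)).card) N e le_rfl hcong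
  set P := N * d + c + 1 with hP
  have hPow : N * d + c < b ^ P := by
    have := (Nat.lt_pow_self (show 1 < b by omega) : P < b ^ P)
    omega
  have hrep : 1 ≤ rep b A := rep_pos b A hA1
  have hmul : b ^ P ≤ rep b A * b ^ P := Nat.le_mul_of_pos_left _ (by omega)
  refine ⟨rep b A * b ^ P, by omega, ?_⟩
  intro i hi
  have hiN : i < N := by omega
  have hid : i * d ≤ N * d := Nat.mul_le_mul_right d (by omega)
  obtain ⟨k, hk⟩ := hA i hiN
  refine ⟨k + 1, ?_⟩
  rw [Function.iterate_succ_apply]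
  have hS : S c b (rep b A * b ^ P + i * d) = c + A + D b (i * d) := by
    rw [S_eq, Dsplit b hb P (rep b A) (i * d) (by omega), Drep b hb A]
    omega
  rw [hS]
  exact hk
end
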